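/- The abelian subalgebra D_n^0 = ⊕_{i=1}^n K∂_i equals its own centralizer in the Lie algebra D_n = Der_K(P_n); in particular it is a maximal abelian Lie subalgebra. -/

import Mathlib

open MvPolynomial

section Aux

variable {n : ℕ} {K : Type*} [Field K] [CharZero K]

private lemma coeff_pderiv_aux (i : Fin n) (t : Fin n →₀ ℕ) (p : MvPolynomial (Fin n) K) :
    coeff t (pderiv i p) = ((t i : K) + 1) * coeff (t + Finsupp.single i 1) p := by
  induction p using MvPolynomial.induction_on' with
  | add p q hp hq => simp [hp, hq, mul_add]
  | monomial s a =>
    rw [pderiv_monomial, coeff_monomial, coeff_monomial]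
    by_cases h : s = t + Finsupp.single i 1
    · subst h
      have h1 : t + Finsupp.single i 1 - Finsupp.single i 1 = t := by
        ext j
        simp [Finsupp.single_apply]
      have h2 : ((t + Finsupp.single i 1 : Fin n →₀ ℕ)) i = t i + 1 := by simp
      rw [if_pos h1, h2]
      push_cast
      simp only [if_true]
      ring
    · rw [if_neg h, mul_zero]
      split_ifs with h1
      · have h0 : s i = 0 := by
          by_contra h0
          apply h
          ext j
          have hj : ((s - Finsupp.single i 1 : Fin n →₀ ℕ)) j = t j := by rw [h1]
          rw [Finsupp.tsub_apply] at hj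
          rw [Finsupp.add_apply]
          by_cases hij : i = j
          · subst hij
            rw [Finsupp.single_eq_same] at hj ⊢
            omega
          · rw [Finsupp.single_eq_of_ne' hij] at hj ⊢
            omega
        rw [h0]
        simp
      · rfl

private lemma eq_C_of_pderiv_eq_zero (p : MvPolynomial (Fin n) K)
    (h : ∀ i, pderiv i p = 0) : p = C (coeff 0 p) := by
  ext m
  by_cases hm : m = 0
  · subst hm; simp
  · rw [coeff_C, if_neg fun h0 => hm h0.symm]
    obtain ⟨i, hi⟩ : ∃ i, m i ≠ 0 := by
      by_contra hc
      push_neg at hc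
      exact hm (Finsupp.ext hc)
    have key := coeff_pderiv_aux i (m - Finsupp.single i 1) p
    rw [h i, coeff_zero] at key
    have hms : m - Finsupp.single i 1 + Finsupp.single i 1 = m := by
      ext j
      rw [Finsupp.add_apply, Finsupp.tsub_apply]
      by_cases hij : i = j
      · subst hij
        rw [Finsupp.single_eq_same]
        omega
      · rw [Finsupp.single_eq_of_ne' hij]
        omega
    rw [hms] at key
    have hne : ((((m - Finsupp.single i 1 : Fin n →₀ ℕ)) i : K) + 1) ≠ 0 := Nat.cast_add_one_ne_zero _
    rcases mul_eq_zero.mp key.symm with h' | h'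
    · exact absurd h' hne
    · exact h'

private lemma pderiv_bracket (i j : Fin n) :
    ⁅(pderiv i : Derivation K (MvPolynomial (Fin n) K) (MvPolynomial (Fin n) K)),
      (pderiv j : Derivation K (MvPolynomial (Fin n) K) (MvPolynomial (Fin n) K))⁆ = 0 := by
  apply derivation_ext
  intro k
  rw [Derivation.commutator_apply]
  rcases eq_or_ne j k with rfl | hjk
  · rcases eq_or_ne i j with rfl | hij
    · simp
    · simp [pderiv_X_of_ne (Ne.symm hij)]
  · rcases eq_or_ne i k with rfl | hik
    · simp [pderiv_X_of_ne (Ne.symm hjk)]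
    · simp [pderiv_X_of_ne (Ne.symm hjk), pderiv_X_of_ne (Ne.symm hik)]

/-- The kernel of left bracketing with `d`, as a submodule. -/
private def lieKer (d : Derivation K (MvPolynomial (Fin n) K) (MvPolynomial (Fin n) K)) :
    Submodule K (Derivation K (MvPolynomial (Fin n) K) (MvPolynomial (Fin n) K)) where
  carrier := {e | ⁅d, e⁆ = 0}
  add_mem' := fun {a} {b} ha hb =>
    (lie_add d a b).trans (by rw [Set.mem_setOf_eq] at ha hb; rw [ha, hb, add_zero])
  zero_mem' := lie_zero d
  smul_mem' := fun c a ha =>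
    (lie_smul c d a).trans (by rw [Set.mem_setOf_eq] at ha; rw [ha, smul_zero])

/-- The kernel of right bracketing with `e`, as a submodule. -/
private def lieKer' (e : Derivation K (MvPolynomial (Fin n) K) (MvPolynomial (Fin n) K)) :
    Submodule K (Derivation K (MvPolynomial (Fin n) K) (MvPolynomial (Fin n) K)) where
  carrier := {d | ⁅d, e⁆ = 0}
  add_mem' := fun {a} {b} ha hb =>
    (add_lie a b e).trans (by rw [Set.mem_setOf_eq] at ha hb; rw [ha, hb, add_zero])
  zero_mem' := zero_lie e
  smul_mem' := fun c a ha =>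
    (smul_lie c a e).trans (by rw [Set.mem_setOf_eq] at ha; rw [ha, smul_zero])

end Aux

/-- The abelian subalgebra D_n^0 = ⊕ K∂_i equals its own centralizer in D_n = Der_K(P_n);
in particular it is a maximal abelian Lie subalgebra. -/
theorem const_derivations_eq_centralizer (n : ℕ) (K : Type*) [Field K] [CharZero K]
    (D0 : Submodule K (Derivation K (MvPolynomial (Fin n) K) (MvPolynomial (Fin n) K)))
    (hD0 : D0 = Submodule.span K {d | ∃ i : Fin n,
      d = (pderiv i : Derivation K (MvPolynomial (Fin n) K) (MvPolynomial (Fin n) K))}) :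
    {d : Derivation K (MvPolynomial (Fin n) K) (MvPolynomial (Fin n) K) |
        ∀ e ∈ D0, ⁅d, e⁆ = 0} = (D0 : Set _) ∧
    ∀ A : Submodule K (Derivation K (MvPolynomial (Fin n) K) (MvPolynomial (Fin n) K)),
      D0 ≤ A → (∀ x ∈ A, ∀ y ∈ A, ⁅x, y⁆ = 0) → A = D0 := by
  -- Step 1 : each pderiv commutes with every element of D0
  have hpd : ∀ i : Fin n, ∀ e ∈ D0,
      ⁅(pderiv i : Derivation K (MvPolynomial (Fin n) K) (MvPolynomial (Fin n) K)), e⁆ = 0 := by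
    intro i e he
    have hle : D0 ≤ lieKer (pderiv i) := by
      rw [hD0, Submodule.span_le]
      rintro d ⟨j, rfl⟩
      exact pderiv_bracket i j
    exact hle he
  -- Step 2 : centralizer ⊆ D0
  have hsub : ∀ d : Derivation K (MvPolynomial (Fin n) K) (MvPolynomial (Fin n) K),
      (∀ e ∈ D0, ⁅d, e⁆ = 0) → d ∈ D0 := by
    intro d hd
    -- d commutes with each pderiv i
    have hcomm : ∀ i : Fin n, ∀ f : MvPolynomial (Fin n) K,
        d (pderiv i f) = pderiv i (d f) := by
      intro i f
      have hmem : (pderiv i : Derivation K (MvPolynomial (Fin n) K) (MvPolynomial (Fin n) K))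
          ∈ D0 := by
        rw [hD0]; exact Submodule.subset_span ⟨i, rfl⟩
      have h0 := hd _ hmem
      have := congrArg (fun D : Derivation K (MvPolynomial (Fin n) K) (MvPolynomial (Fin n) K)
        => D f) h0
      simpa [Derivation.commutator_apply, sub_eq_zero] using this
    -- all partials of d (X j) vanish
    have hconst : ∀ j : Fin n, d (X j) = C (coeff 0 (d (X j))) := by
      intro j
      apply eq_C_of_pderiv_eq_zero
      intro i
      have := (hcomm i (X j)).symm
      rcases eq_or_ne i j with rfl | hij
      · rw [pderiv_X_self] at this
        rw [this, Derivation.map_one_eq_zero]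
      · rw [pderiv_X_of_ne (Ne.symm hij)] at this
        rw [this, map_zero]
    -- write d as a linear combination of the pderivs
    have hdeq : d = ∑ j : Fin n, coeff 0 (d (X j)) •
        (pderiv j : Derivation K (MvPolynomial (Fin n) K) (MvPolynomial (Fin n) K)) := by
      apply derivation_ext
      intro k
      rw [hconst k]
      have hsum : (∑ j : Fin n, coeff 0 (d (X j)) •
          (pderiv j : Derivation K (MvPolynomial (Fin n) K) (MvPolynomial (Fin n) K))) (X k)
          = ∑ j : Fin n, coeff 0 (d (X j)) • (pderiv j (X k)) := by
        have hc : ⇑(∑ j : Fin n, coeff 0 (d (X j)) •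
            (pderiv j : Derivation K (MvPolynomial (Fin n) K) (MvPolynomial (Fin n) K)))
            = ∑ j : Fin n, ⇑(coeff 0 (d (X j)) •
            (pderiv j : Derivation K (MvPolynomial (Fin n) K) (MvPolynomial (Fin n) K))) :=
          map_sum Derivation.coeFnAddMonoidHom _ _
        rw [hc, Finset.sum_apply]
        simp [Derivation.smul_apply]
      rw [hsum, Finset.sum_eq_single k]
      · rw [pderiv_X_self, smul_eq_C_mul, mul_one]
      · intro j _ hj
        rw [pderiv_X_of_ne (Ne.symm hj), smul_zero]
      · intro hk
        exact absurd (Finset.mem_univ k) hk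
    rw [hdeq, hD0]
    exact Submodule.sum_mem _ fun j _ =>
      Submodule.smul_mem _ _ (Submodule.subset_span ⟨j, rfl⟩)
  constructor
  · apply Set.eq_of_subset_of_subset
    · intro d hd
      exact hsub d hd
    · intro d hd e he
      have hle : D0 ≤ lieKer' e := by
        rw [hD0, Submodule.span_le]
        rintro x ⟨i, rfl⟩
        exact hpd i e he
      exact hle hd
  · intro A hle habel
    refine le_antisymm (fun a ha => hsub a fun e he => habel a ha e (hle he)) hle
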